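/- Let n ≥ 8 be an integer. Then (n+2)/n · 1/sinc(2/n) - 1 < 4/n, where sinc(t) = sin(πt)/(πt). -/

import Mathlib

open Real

theorem sinc_bound_n (n : ℕ) (hn : 8 ≤ n) :
    ((n : ℝ) + 2) / n * (1 / (Real.sin (π * (2 / n)) / (π * (2 / n)))) - 1 < 4 / n := by
  have hn' : (8:ℝ) ≤ n := by exact_mod_cast hn
  have hnpos : (0:ℝ) < n := by linarith
  have hπ := Real.pi_pos
  have hπlt : π < 3.15 := by
    have := Real.pi_lt_d2
    linarith
  set x : ℝ := π * (2 / n) with hx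
  have hx0 : 0 < x := by positivity
  have hxn : x * n = 2 * π := by
    rw [hx]; field_simp
  have hx1 : x ≤ 1 := by
    nlinarith
  have hsin : x - x ^ 3 / 4 < Real.sin x := by
    have := Real.sin_gt_sub_cube hx0
    linarith [pow_pos hx0 3]
  have hx2 : x ^ 2 ≤ 1 := by nlinarith
  have hsinpos : 0 < Real.sin x := by nlinarith
  have hsq : ((n:ℝ) + 4) * x ^ 2 < 8 := by
    nlinarith [sq_nonneg x, sq_nonneg ((n:ℝ) - 8), mul_pos hx0 hx0]
  have key : ((n:ℝ) + 2) * x < ((n:ℝ) + 4) * Real.sin x := by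
    nlinarith [mul_pos hx0 hx0]
  have h4 : (4:ℝ) / n = ((n:ℝ) + 4) / n - 1 := by field_simp; ring
  rw [one_div_div, h4, sub_lt_sub_iff_right, div_mul_div_comm,
    div_lt_div_iff₀ (by positivity) hnpos]
  nlinarith [mul_pos hnpos hsinpos]
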